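/- arXiv:1308.6624 — 2 statements merged into one kernel-verified Lean document; each statement's English description precedes it below -/
import Mathlib

section
/- Let k be a field of characteristic zero and A = k[x_1,…,x_n]/J an Artinian Gorenstein graded quotient by a homogeneous ideal J ⊆ (x_1,…,x_n), with socle degree η. Let ρ : A → k be a linear form vanishing on all graded components A_j for j < η and nonzero on A_η. Then the homogeneous polynomial S(x_1,…,x_n) = ρ((x_1 e_1 + ⋯ + x_n e_n)^η), where e_i is the class of x_i, satisfies Ann(S) = J. In particular, every Artinian Gorenstein graded quotient admits a homogeneous Macaulay inverse system of degree equal to its socle degree. -/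
open MvPolynomial

set_option synthInstance.maxHeartbeats 400000
set_option maxHeartbeats 1000000

/-- The iterated partial derivative operator `∂^d = ∏ᵢ (∂/∂xᵢ)^{dᵢ}` attached to a
multi-index `d`. -/
noncomputable def diffMonomial {n : ℕ} {k : Type*} [CommSemiring k] (d : Fin n →₀ ℕ) :
    Module.End k (MvPolynomial (Fin n) k) :=
  (List.ofFn fun i : Fin n =>
    ((pderiv i).toLinearMap : Module.End k (MvPolynomial (Fin n) k)) ^ (d i)).prod

/-- The action of a polynomial `f` on a polynomial `g` by substituting partial
differentiation operators for the variables: `f(∂/∂x_1, …, ∂/∂x_n)(g)`. -/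
noncomputable def diffOp {n : ℕ} {k : Type*} [CommSemiring k]
    (f g : MvPolynomial (Fin n) k) : MvPolynomial (Fin n) k :=
  ∑ d ∈ f.support, f.coeff d • diffMonomial d g

/-- Apply a linear functional `ρ : A → k` coefficientwise to a polynomial with
coefficients in `A`, producing a polynomial with coefficients in `k`. -/
noncomputable def coeffMap {n : ℕ} {k A : Type*} [CommSemiring k] [CommSemiring A]
    (ρ : A → k) (p : MvPolynomial (Fin n) A) : MvPolynomial (Fin n) k :=
  ∑ d ∈ p.support, monomial d (ρ (p.coeff d))

/-- The socle `Soc(A) = { x ∈ M : x M = 0 }` of an algebra `A` with respect to an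
ideal `M` (to be taken as the maximal ideal), as a `k`-submodule of `A`. -/
noncomputable def socle (k : Type*) {A : Type*} [Field k] [CommRing A] [Algebra k A]
    (M : Ideal A) : Submodule k A :=
  (Submodule.restrictScalars k M) ⊓ ⨅ y ∈ M, LinearMap.ker (LinearMap.mulLeft k y)

section Aux

variable {n : ℕ} {k A : Type*} [CommSemiring k] [CommSemiring A]

lemma coeff_coeffMap (ρ : A → k) (h0 : ρ 0 = 0) (p : MvPolynomial (Fin n) A)
    (m : Fin n →₀ ℕ) : coeff m (coeffMap ρ p) = ρ (coeff m p) := by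
  classical
  unfold coeffMap
  rw [coeff_sum]
  simp_rw [coeff_monomial]
  rw [Finset.sum_ite_eq' p.support m (fun d => ρ (coeff d p))]
  split_ifs with h
  · rfl
  · rw [notMem_support_iff.mp h, h0]

lemma coeffMap_monomial (ρ : A → k) (h0 : ρ 0 = 0) (d : Fin n →₀ ℕ) (a : A) :
    coeffMap ρ (monomial d a) = monomial d (ρ a) := by
  ext m
  rw [coeff_coeffMap ρ h0, coeff_monomial, coeff_monomial]
  split_ifs with h
  · rfl
  · exact h0

variable [Algebra k A]

lemma pderiv_coeffMap (ρ : A →ₗ[k] k) (i : Fin n) (p : MvPolynomial (Fin n) A) :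
    pderiv i (coeffMap (⇑ρ) p) = coeffMap (⇑ρ) (pderiv i p) := by
  have h0 : ρ (0 : A) = 0 := map_zero ρ
  have hadd : ∀ q r : MvPolynomial (Fin n) A,
      coeffMap (⇑ρ) (q + r) = coeffMap (⇑ρ) q + coeffMap (⇑ρ) r := by
    intro q r; ext m
    simp [coeff_coeffMap _ h0, coeff_add]
  induction p using MvPolynomial.induction_on' with
  | monomial d a =>
    rw [coeffMap_monomial _ h0, pderiv_monomial, pderiv_monomial, coeffMap_monomial _ h0]
    congr 1
    rw [mul_comm a, mul_comm (ρ a), ← nsmul_eq_mul, ← nsmul_eq_mul, map_nsmul]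
  | add p q hp hq =>
    rw [hadd, map_add, map_add, hadd, hp, hq]

lemma pderiv_pow_coeffMap (ρ : A →ₗ[k] k) (i : Fin n) (e : ℕ) (p : MvPolynomial (Fin n) A) :
    (((pderiv i).toLinearMap : Module.End k (MvPolynomial (Fin n) k)) ^ e) (coeffMap (⇑ρ) p)
      = coeffMap (⇑ρ) ((((pderiv i).toLinearMap : Module.End A (MvPolynomial (Fin n) A)) ^ e) p) := by
  induction e generalizing p with
  | zero => simp
  | succ e ih =>
    rw [pow_succ, pow_succ, Module.End.mul_apply, Module.End.mul_apply]
    rw [show ((pderiv i).toLinearMap : Module.End k (MvPolynomial (Fin n) k))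
        (coeffMap (⇑ρ) p) = pderiv i (coeffMap (⇑ρ) p) from rfl,
      pderiv_coeffMap, ih]
    rfl

lemma list_coeffMap (ρ : A →ₗ[k] k) (c : Fin n →₀ ℕ) (l : List (Fin n))
    (p : MvPolynomial (Fin n) A) :
    ((l.map fun i => ((pderiv i).toLinearMap : Module.End k (MvPolynomial (Fin n) k)) ^ c i).prod)
        (coeffMap (⇑ρ) p)
      = coeffMap (⇑ρ)
        (((l.map fun i => ((pderiv i).toLinearMap : Module.End A (MvPolynomial (Fin n) A)) ^ c i).prod) p) := by
  induction l generalizing p with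
  | nil => simp
  | cons i l ih =>
    simp only [List.map_cons, List.prod_cons, Module.End.mul_apply]
    rw [ih, pderiv_pow_coeffMap]

lemma diffMonomial_coeffMap (ρ : A →ₗ[k] k) (c : Fin n →₀ ℕ) (p : MvPolynomial (Fin n) A) :
    diffMonomial c (coeffMap (⇑ρ) p) = coeffMap (⇑ρ) (diffMonomial c p) := by
  unfold diffMonomial
  rw [List.ofFn_eq_map, List.ofFn_eq_map]
  exact list_coeffMap ρ c _ p

end Aux
section LPow

variable {n : ℕ} {R : Type*} [CommSemiring R]

lemma pderiv_L (e : Fin n → R) (i : Fin n) :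
    pderiv i (∑ j, C (e j) * X j : MvPolynomial (Fin n) R) = C (e i) := by
  classical
  rw [map_sum]
  rw [Finset.sum_eq_single i]
  · rw [pderiv_C_mul, pderiv_X_self, mul_one]
  · intro j _ hj
    rw [pderiv_C_mul, pderiv_X_of_ne hj, mul_zero]
  · intro h; exact absurd (Finset.mem_univ i) h

lemma pderiv_pow_L (e : Fin n → R) (i : Fin n) (m : ℕ) :
    ∀ (t : ℕ) (a : R),
    (((pderiv i).toLinearMap : Module.End R (MvPolynomial (Fin n) R)) ^ m)
        (C a * (∑ j, C (e j) * X j) ^ t)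
      = Nat.descFactorial t m •
        (C (a * e i ^ m) * (∑ j, C (e j) * X j) ^ (t - m)) := by
  induction m with
  | zero => intro t a; simp
  | succ m ih =>
    intro t a
    rw [pow_succ, Module.End.mul_apply]
    have hstep : ((pderiv i).toLinearMap : Module.End R (MvPolynomial (Fin n) R))
        (C a * (∑ j, C (e j) * X j) ^ t)
        = t • (C (a * e i) * (∑ j, C (e j) * X j) ^ (t - 1)) := by
      show pderiv i (C a * (∑ j, C (e j) * X j) ^ t) = _
      rw [pderiv_C_mul, Derivation.leibniz_pow, pderiv_L]
      simp only [smul_eq_mul, nsmul_eq_mul, C_mul]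
      ring
    rw [hstep, map_nsmul, ih (t - 1) (a * e i), smul_smul]
    rw [mul_assoc, ← pow_succ']
    cases t with
    | zero => simp
    | succ t =>
      rw [Nat.succ_descFactorial_succ, Nat.succ_sub_one, Nat.succ_sub_succ]

lemma list_L (e : Fin n → R) (c : Fin n →₀ ℕ) (l : List (Fin n)) (t : ℕ) (a : R) :
    ((l.map fun i => ((pderiv i).toLinearMap : Module.End R (MvPolynomial (Fin n) R)) ^ c i).prod)
        (C a * (∑ j, C (e j) * X j) ^ t)
      = Nat.descFactorial t ((l.map c).sum) •
          (C (a * (l.map fun i => e i ^ c i).prod) *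
            (∑ j, C (e j) * X j) ^ (t - (l.map c).sum)) := by
  induction l generalizing a with
  | nil => simp
  | cons i l ih =>
    simp only [List.map_cons, List.prod_cons, List.sum_cons, Module.End.mul_apply]
    rw [ih a, map_nsmul, pderiv_pow_L, smul_smul]
    congr 1
    · rw [← Nat.descFactorial_mul_descFactorial (Nat.le_add_left _ (c i)),
        mul_comm, Nat.add_sub_cancel]
    · rw [Nat.sub_sub, add_comm (c i)]
      congr 2
      ring

lemma diffMonomial_L (e : Fin n → R) (c : Fin n →₀ ℕ) (t : ℕ) :
    diffMonomial c ((∑ j, C (e j) * X j : MvPolynomial (Fin n) R) ^ t)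
      = Nat.descFactorial t (∑ i, c i) •
          (C (∏ i, e i ^ c i) * (∑ j, C (e j) * X j) ^ (t - ∑ i, c i)) := by
  have h1 : ((List.finRange n).map c).sum = ∑ i, c i := by
    rw [← List.ofFn_eq_map, List.sum_ofFn]
  have h2 : ((List.finRange n).map fun i => e i ^ c i).prod = ∏ i, e i ^ c i := by
    rw [← List.ofFn_eq_map, List.prod_ofFn]
  have := list_L e c (List.finRange n) t 1
  rw [h1, h2, one_mul] at this
  unfold diffMonomial
  rw [List.ofFn_eq_map]
  rw [← one_mul ((∑ j, C (e j) * X j : MvPolynomial (Fin n) R) ^ t), ← C_1]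
  exact this

end LPow
section NCoeff

variable {n : ℕ}

/-- degree helper -/
lemma degree_eq_sum_univ (m : Fin n →₀ ℕ) : m.degree = ∑ i, m i := by
  rw [Finsupp.degree]
  exact Finset.sum_subset (Finset.subset_univ _)
    (fun i _ hi => Finsupp.notMem_support_iff.mp hi)

lemma isHom_coeff_eq_zero {R : Type*} [CommSemiring R] {p : MvPolynomial (Fin n) R} {d : ℕ}
    (hp : p.IsHomogeneous d) {m : Fin n →₀ ℕ} (hm : (∑ i, m i) ≠ d) :
    coeff m p = 0 := by
  by_contra h
  exact hm (by rw [← degree_eq_sum_univ, Finsupp.degree_eq_weight_one]; exact hp h)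

lemma sumX_pow_isHom {R : Type*} [CommSemiring R] (t : ℕ) :
    ((∑ i, (X i : MvPolynomial (Fin n) R)) ^ t).IsHomogeneous t := by
  have h1 : (∑ i, (X i : MvPolynomial (Fin n) R)).IsHomogeneous 1 :=
    MvPolynomial.IsHomogeneous.sum _ _ _ (fun i _ => isHomogeneous_X R i)
  simpa using h1.pow t

lemma N_pos : ∀ (t : ℕ) (m : Fin n →₀ ℕ), (∑ i, m i) = t →
    0 < coeff m ((∑ i, (X i : MvPolynomial (Fin n) ℕ)) ^ t) := by
  classical
  intro t
  induction t with
  | zero =>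
    intro m hm
    have : m = 0 := by
      ext i
      have := Finset.sum_eq_zero_iff.mp hm i (Finset.mem_univ i)
      simpa using this
    subst this
    simp
  | succ t ih =>
    intro m hm
    have hex : ∃ i₀ : Fin n, m i₀ ≠ 0 := by
      by_contra h
      push_neg at h
      rw [Finset.sum_eq_zero (fun i _ => h i)] at hm
      omega
    obtain ⟨i₀, hi₀⟩ := hex
    rw [pow_succ, Finset.mul_sum]
    rw [coeff_sum]
    have hterm : 0 < coeff m ((∑ i, (X i : MvPolynomial (Fin n) ℕ)) ^ t * X i₀) := by
      rw [coeff_mul_X']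
      rw [if_pos (Finsupp.mem_support_iff.mpr hi₀)]
      apply ih
      have hsub : ∀ j : Fin n, ((m - Finsupp.single i₀ 1 : Fin n →₀ ℕ)) j
          = m j - (Finsupp.single i₀ 1) j := by
        intro j
        exact Finsupp.tsub_apply m (Finsupp.single i₀ 1) j
      have h1 : ∑ j, (m - Finsupp.single i₀ 1 : Fin n →₀ ℕ) j
          = (m i₀ - 1) + ∑ j ∈ Finset.univ.erase i₀, m j := by
        rw [← Finset.add_sum_erase _ _ (Finset.mem_univ i₀), hsub, Finsupp.single_eq_same]
        congr 1
        apply Finset.sum_congr rfl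
        intro j hj
        rw [hsub, Finsupp.single_eq_of_ne' (Finset.ne_of_mem_erase hj).symm]
        omega
      have h2 : ∑ j, m j = m i₀ + ∑ j ∈ Finset.univ.erase i₀, m j :=
        (Finset.add_sum_erase _ _ (Finset.mem_univ i₀)).symm
      omega
    calc 0 < coeff m ((∑ i, (X i : MvPolynomial (Fin n) ℕ)) ^ t * X i₀) := hterm
    _ ≤ ∑ i, coeff m ((∑ i, (X i : MvPolynomial (Fin n) ℕ)) ^ t * X i) :=
        Finset.single_le_sum
          (f := fun i => coeff m ((∑ j, (X j : MvPolynomial (Fin n) ℕ)) ^ t * X i))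
          (fun i _ => Nat.zero_le _) (Finset.mem_univ i₀)

lemma N_zero (t : ℕ) (m : Fin n →₀ ℕ) (hm : (∑ i, m i) ≠ t) :
    coeff m ((∑ i, (X i : MvPolynomial (Fin n) ℕ)) ^ t) = 0 :=
  isHom_coeff_eq_zero (sumX_pow_isHom t) hm

end NCoeff
section Psi

variable {n : ℕ} {A : Type*} [CommSemiring A]

lemma psi_coeff (e : Fin n → A) (q : MvPolynomial (Fin n) ℕ) (m : Fin n →₀ ℕ) :
    coeff m (aeval (fun i => C (e i) * X i : Fin n → MvPolynomial (Fin n) A) q)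
      = coeff m q • ∏ i, e i ^ m i := by
  classical
  induction q using MvPolynomial.induction_on' with
  | monomial d a =>
    rw [aeval_monomial]
    have hprod : (d.prod fun i k => (C (e i) * X i : MvPolynomial (Fin n) A) ^ k)
        = C (∏ i, e i ^ d i) * monomial d 1 := by
      rw [Finsupp.prod]
      have : ∀ i ∈ d.support, (C (e i) * X i : MvPolynomial (Fin n) A) ^ d i
          = C (e i ^ d i) * X i ^ d i := by
        intro i _; rw [mul_pow, C_pow]
      rw [Finset.prod_congr rfl this, Finset.prod_mul_distrib, ← map_prod (C : A →+* MvPolynomial (Fin n) A)]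
      congr 1
      · congr 1
        exact Finset.prod_subset (Finset.subset_univ _)
          (fun i _ hi => by rw [Finsupp.notMem_support_iff.mp hi, pow_zero])
      · exact prod_X_pow_eq_monomial
    rw [hprod]
    have halg : (algebraMap ℕ (MvPolynomial (Fin n) A) a) = C (a : A) := by
      rw [eq_natCast (algebraMap ℕ (MvPolynomial (Fin n) A)) a, ← C_eq_coe_nat]
    rw [halg, ← mul_assoc, ← C_mul, C_mul_monomial, coeff_monomial, coeff_monomial]
    split_ifs with h
    · subst h
      rw [mul_one, nsmul_eq_mul]
    · rw [zero_smul]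
  | add p q hp hq =>
    rw [map_add, coeff_add, coeff_add, hp, hq, add_smul]

lemma coeff_L_pow (e : Fin n → A) (t : ℕ) (m : Fin n →₀ ℕ) :
    coeff m ((∑ j, C (e j) * X j : MvPolynomial (Fin n) A) ^ t)
      = coeff m ((∑ j, (X j : MvPolynomial (Fin n) ℕ)) ^ t) • ∏ i, e i ^ m i := by
  have hL : (aeval (fun i => C (e i) * X i : Fin n → MvPolynomial (Fin n) A))
      ((∑ j, (X j : MvPolynomial (Fin n) ℕ)) ^ t)
      = (∑ j, C (e j) * X j : MvPolynomial (Fin n) A) ^ t := by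
    rw [map_pow, map_sum]
    simp [aeval_X]
  rw [← hL, psi_coeff]

end Psi

section SpanPow

variable {n : ℕ} {R : Type*} [CommSemiring R]

lemma prod_X_pow_mem (m : Fin n →₀ ℕ) (s : Finset (Fin n)) :
    (∏ i ∈ s, (X i : MvPolynomial (Fin n) R) ^ m i)
      ∈ (Ideal.span (Set.range (X : Fin n → MvPolynomial (Fin n) R))) ^ (∑ i ∈ s, m i) := by
  classical
  induction s using Finset.induction_on with
  | empty => simp [Ideal.one_eq_top]
  | @insert i s hi ih =>
    rw [Finset.prod_insert hi, Finset.sum_insert hi, pow_add]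
    exact Ideal.mul_mem_mul
      (Ideal.pow_mem_pow (Ideal.subset_span (Set.mem_range_self i)) _) ih

lemma homog_mem_span_pow {p : MvPolynomial (Fin n) R} {d : ℕ} (hp : p.IsHomogeneous d) :
    p ∈ (Ideal.span (Set.range (X : Fin n → MvPolynomial (Fin n) R))) ^ d := by
  classical
  rw [← support_sum_monomial_coeff p]
  apply Ideal.sum_mem
  intro m hm
  have hdeg : ∑ i, m i = d := by
    by_contra h
    exact (mem_support_iff.mp hm) (isHom_coeff_eq_zero hp h)
  have : (monomial m (coeff m p) : MvPolynomial (Fin n) R)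
      = C (coeff m p) * ∏ i, (X i : MvPolynomial (Fin n) R) ^ m i := by
    rw [monomial_eq]
    congr 1
    rw [Finsupp.prod]
    exact Finset.prod_subset (Finset.subset_univ _)
      (fun i _ hi => by rw [Finsupp.notMem_support_iff.mp hi, pow_zero])
  rw [this, ← hdeg]
  exact Ideal.mul_mem_left _ _ (prod_X_pow_mem m Finset.univ)

end SpanPow
section Socle

variable {k A : Type*} [Field k] [CommRing A] [Algebra k A]

lemma mem_socle_iff (M : Ideal A) (x : A) :
    x ∈ socle k M ↔ x ∈ M ∧ ∀ y ∈ M, y * x = 0 := by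
  unfold socle
  simp [Submodule.mem_inf, Submodule.mem_iInf, LinearMap.mem_ker, LinearMap.mulLeft_apply,
    Submodule.restrictScalars_mem]

lemma nondeg (M : Ideal A)
    (hM : ∀ a : A, ∃ c : k, a - algebraMap k A c ∈ M)
    (η : ℕ) (hη₂ : M ^ (η + 1) = ⊥)
    (hsoc : Module.finrank k (socle k M) = 1)
    (ρ : A →ₗ[k] k) (z : A) (hz : z ∈ socle k M) (hzρ : ρ z ≠ 0)
    (a : A) (ha : ∀ b : A, ρ (a * b) = 0) : a = 0 := by
  classical
  by_contra ha0
  -- main step : find c ≠ 0 with c ∈ socle and ρ (c * x) = 0 for all x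
  have hMbot : M ≠ ⊥ := by
    intro hbot
    apply hzρ
    have : z ∈ M := ((mem_socle_iff M z).mp hz).1
    rw [hbot, Ideal.mem_bot] at this
    rw [this, map_zero]
  obtain ⟨c, hc0, hcM, hcann, hcρ⟩ :
      ∃ c : A, c ≠ 0 ∧ c ∈ M ∧ (∀ y ∈ M, c * y = 0) ∧ (∀ x : A, ρ (c * x) = 0) := by
    have hPex : ∃ t : ℕ, ¬ ∃ b ∈ M ^ t, a * b ≠ 0 := by
      refine ⟨η + 1, ?_⟩
      rintro ⟨b, hb, hab⟩
      rw [hη₂, Ideal.mem_bot] at hb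
      exact hab (by rw [hb, mul_zero])
    let u := Nat.find hPex
    have hu : ¬ ∃ b ∈ M ^ u, a * b ≠ 0 := Nat.find_spec hPex
    have hu0 : u ≠ 0 := by
      intro h
      apply hu
      rw [h]
      exact ⟨1, by simp [Ideal.one_eq_top], by rwa [mul_one]⟩
    by_cases hu1 : u = 1
    · -- a * M = 0
      have haM : ∀ y ∈ M, a * y = 0 := by
        intro y hy
        by_contra h
        exact hu ⟨y, by rwa [hu1, pow_one], h⟩
      obtain ⟨c₀, hc₀⟩ := hM a
      by_cases hc00 : c₀ = 0
      · refine ⟨a, ha0, ?_, haM, fun x => ha x⟩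
        rw [hc00, map_zero, sub_zero] at hc₀
        exact hc₀
      · -- a is a unit, so M = ⊥, contradiction
        exfalso
        apply hMbot
        have hnil : IsNilpotent (a - algebraMap k A c₀) := by
          refine ⟨η + 1, ?_⟩
          have := Ideal.pow_mem_pow hc₀ (η + 1)
          rwa [hη₂, Ideal.mem_bot] at this
        have hunit : IsUnit a := by
          have h1 : IsUnit (algebraMap k A c₀) := by
            refine isUnit_iff_exists_inv.mpr ⟨algebraMap k A c₀⁻¹, ?_⟩
            rw [← map_mul, mul_inv_cancel₀ hc00, map_one]
          have := hnil.isUnit_add_right_of_commute h1 (Commute.all _ _)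
          rwa [sub_add_cancel] at this
        rw [Submodule.eq_bot_iff]
        intro y hy
        obtain ⟨v, hv⟩ := hunit.exists_left_inv
        calc y = v * a * y := by rw [hv, one_mul]
        _ = v * (a * y) := by ring
        _ = 0 := by rw [haM y hy, mul_zero]
    · -- u ≥ 2
      have hu2 : 2 ≤ u := by omega
      have hP : ∃ b ∈ M ^ (u - 1), a * b ≠ 0 := by
        by_contra h
        exact Nat.find_min hPex (by omega : u - 1 < u) h
      obtain ⟨b, hb, hab⟩ := hP
      refine ⟨a * b, hab, ?_, ?_, ?_⟩
      · have hsub : M ^ (u - 1) ≤ M := Ideal.pow_le_self (by omega)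
        exact Ideal.mul_mem_left _ a (hsub hb)
      · intro y hy
        by_contra h
        apply hu
        refine ⟨b * y, ?_, by rwa [← mul_assoc]⟩
        have : b * y ∈ M ^ (u - 1) * M := Ideal.mul_mem_mul hb hy
        rwa [← pow_succ, Nat.sub_add_cancel (by omega)] at this
      · intro x
        rw [mul_assoc]
        exact ha (b * x)
  -- c generates the socle
  have hcsoc : c ∈ socle k M := (mem_socle_iff M c).mpr ⟨hcM, fun y hy => by
    rw [mul_comm]; exact hcann y hy⟩
  obtain ⟨v, hv0, hvgen⟩ := finrank_eq_one_iff'.mp hsoc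
  obtain ⟨μc, hμc⟩ := hvgen ⟨c, hcsoc⟩
  have hμc0 : μc ≠ 0 := by
    intro h
    rw [h, zero_smul] at hμc
    exact hc0 (by simpa using congrArg (Subtype.val) hμc.symm)
  obtain ⟨μz, hμz⟩ := hvgen ⟨z, hz⟩
  have hzc : z = (μz / μc) • c := by
    have hvc : (v : A) = μc⁻¹ • c := by
      have := congrArg (Subtype.val) hμc
      simp only [SetLike.val_smul] at this
      rw [← this, ← smul_assoc, smul_eq_mul, inv_mul_cancel₀ hμc0, one_smul]
    have := congrArg (Subtype.val) hμz
    simp only [SetLike.val_smul] at this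
    rw [← this, hvc, ← smul_assoc, smul_eq_mul, div_eq_mul_inv]
  apply hzρ
  rw [hzc, map_smul, smul_eq_mul]
  have : ρ c = 0 := by
    have := hcρ 1
    rwa [mul_one] at this
  rw [this, mul_zero]

end Socle
section MoreAux

variable {n : ℕ}

lemma monomial_eq_prod_univ {R : Type*} [CommSemiring R] (d : Fin n →₀ ℕ) (a : R) :
    (monomial d a : MvPolynomial (Fin n) R) = C a * ∏ i, (X i : MvPolynomial (Fin n) R) ^ d i := by
  rw [monomial_eq]
  congr 1
  rw [Finsupp.prod]
  exact Finset.prod_subset (Finset.subset_univ _)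
    (fun i _ hi => by rw [Finsupp.notMem_support_iff.mp hi, pow_zero])

lemma isHom_of_forall {R : Type*} [CommSemiring R] {p : MvPolynomial (Fin n) R} {d : ℕ}
    (h : ∀ m : Fin n →₀ ℕ, coeff m p ≠ 0 → ∑ i, m i = d) : p.IsHomogeneous d := by
  intro m hm
  have h2 : m.degree = ∑ i, m i := degree_eq_sum_univ m
  rw [Finsupp.degree_eq_weight_one] at h2
  refine Eq.trans h2 ?_
  exact h m hm

end MoreAux
/-- Let `k` be a field of characteristic zero and `A = k[x_1,…,x_n]/J`
an Artinian Gorenstein graded quotient by a homogeneous ideal `J ⊆ (x_1,…,x_n)` with socle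
degree `η`. Let `ρ : A → k` be a linear form vanishing on the graded components of degree
`< η` and nonzero in degree `η`. Then `S = ρ((x_1 e_1 + ⋯ + x_n e_n)^η)` is a homogeneous
polynomial of degree `η` which is a Macaulay inverse system for `A`: `Ann(S) = J`. -/
theorem homogeneous_inverse_system
    {k : Type*} [Field k] [CharZero k] (n : ℕ)
    (J : Ideal (MvPolynomial (Fin n) k))
    (hJ : J ≤ Ideal.span (Set.range X))
    (hJhom : ∀ f ∈ J, ∀ d : ℕ, homogeneousComponent d f ∈ J)
    (hArtinian : FiniteDimensional k (MvPolynomial (Fin n) k ⧸ J))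
    (hGor : Module.finrank k
      (socle k (Ideal.map (Ideal.Quotient.mk J) (Ideal.span (Set.range X)))) = 1)
    (η : ℕ)
    (hη₁ : (Ideal.map (Ideal.Quotient.mk J) (Ideal.span (Set.range X))) ^ η ≠ ⊥)
    (hη₂ : (Ideal.map (Ideal.Quotient.mk J) (Ideal.span (Set.range X))) ^ (η + 1) = ⊥)
    (ρ : (MvPolynomial (Fin n) k ⧸ J) →ₗ[k] k)
    (hρlow : ∀ j < η, ∀ p : MvPolynomial (Fin n) k, p.IsHomogeneous j →
      ρ (Ideal.Quotient.mk J p) = 0)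
    (hρtop : ∃ p : MvPolynomial (Fin n) k, p.IsHomogeneous η ∧
      ρ (Ideal.Quotient.mk J p) ≠ 0) :
    (coeffMap (fun a => ρ a)
        ((∑ i, MvPolynomial.C (Ideal.Quotient.mk J (X i)) * X i) ^ η)).IsHomogeneous η ∧
    ∀ f : MvPolynomial (Fin n) k,
      diffOp f (coeffMap (fun a => ρ a)
        ((∑ i, MvPolynomial.C (Ideal.Quotient.mk J (X i)) * X i) ^ η)) = 0 ↔ f ∈ J := by
  classical
  -- notation
  set Q := MvPolynomial (Fin n) k ⧸ J with hQ
  set M : Ideal Q := Ideal.map (Ideal.Quotient.mk J) (Ideal.span (Set.range X)) with hM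
  set e : Fin n → Q := fun i => Ideal.Quotient.mk J (X i) with he
  set E : (Fin n →₀ ℕ) → Q := fun d => ∏ i, e i ^ d i with hE
  set N : (Fin n →₀ ℕ) → ℕ → ℕ :=
    fun m t => coeff m ((∑ i, (X i : MvPolynomial (Fin n) ℕ)) ^ t) with hN
  have h0 : (fun a => ρ a) (0 : Q) = 0 := map_zero ρ
  have hρalg : ∀ (c : k) (x : Q), ρ (algebraMap k Q c * x) = c * ρ x := by
    intro c x
    have h1 : algebraMap k Q c * x = c • x := (Algebra.smul_def c x).symm
    rw [h1, map_smul, smul_eq_mul]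
  -- basic graded facts
  have hη0 : η ≠ 0 := by
    intro hzero
    rw [hzero, show M ^ (0 + 1) = M from pow_one M] at hη₂
    rw [hη₂] at hGor
    have hb : socle k (⊥ : Ideal Q) ≤ ⊥ := le_trans inf_le_left (by simp)
    rw [le_bot_iff] at hb
    rw [hb] at hGor
    simp [finrank_bot] at hGor
  have hmkhom : ∀ (p : MvPolynomial (Fin n) k) (d : ℕ), p.IsHomogeneous d →
      Ideal.Quotient.mk J p ∈ M ^ d := by
    intro p d hp
    rw [hM, ← Ideal.map_pow]
    exact Ideal.mem_map_of_mem _ (homog_mem_span_pow hp)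
  have hbig : ∀ (p : MvPolynomial (Fin n) k) (d : ℕ), η < d → p.IsHomogeneous d →
      Ideal.Quotient.mk J p = 0 := by
    intro p d hd hp
    have h1 := hmkhom p d hp
    have h2 : M ^ d ≤ M ^ (η + 1) := Ideal.pow_le_pow_right (by omega)
    have h3 := h2 h1
    rw [hη₂] at h3
    exact (Submodule.mem_bot _).mp h3
  have hmkmono : ∀ (d : Fin n →₀ ℕ) (a : k),
      Ideal.Quotient.mk J (monomial d a) = algebraMap k Q a * E d := by
    intro d a
    rw [monomial_eq_prod_univ, map_mul, map_prod]
    simp_rw [map_pow]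
    congr 1
  have hmkmono1 : ∀ d : Fin n →₀ ℕ, Ideal.Quotient.mk J (monomial d (1 : k)) = E d := by
    intro d; rw [hmkmono, map_one, one_mul]
  have hE0 : ∀ d : Fin n →₀ ℕ, η < ∑ i, d i → E d = 0 := by
    intro d hd
    have h1 := hbig (monomial d (1 : k)) (∑ i, d i) hd
      (isHomogeneous_monomial _ (degree_eq_sum_univ d))
    rwa [hmkmono1 d] at h1
  have hEadd : ∀ c m : Fin n →₀ ℕ, E c * E m = E (c + m) := by
    intro c m
    rw [hE, ← Finset.prod_mul_distrib]
    apply Finset.prod_congr rfl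
    intro i _
    rw [Finsupp.add_apply, pow_add]
  have hdegsum : ∀ c m : Fin n →₀ ℕ, ∑ i, (c + m) i = (∑ i, c i) + ∑ i, m i := by
    intro c m
    simp [Finsupp.add_apply, Finset.sum_add_distrib]
  -- the key coefficient formula
  have hkey : ∀ (f : MvPolynomial (Fin n) k) (m : Fin n →₀ ℕ),
      coeff m (diffOp f (coeffMap (fun a => ρ a)
          ((∑ i, MvPolynomial.C (e i) * X i) ^ η)))
        = ((η.descFactorial (η - ∑ i, m i) * N m (∑ i, m i) : ℕ) : k) *
            ρ (Ideal.Quotient.mk J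
              (homogeneousComponent (η - ∑ i, m i) f * monomial m (1 : k))) := by
    intro f m
    have hterm : ∀ c ∈ f.support,
        coeff m (coeff c f • diffMonomial c (coeffMap (fun a => ρ a)
            ((∑ i, MvPolynomial.C (e i) * X i) ^ η)))
          = coeff c f *
              (((η.descFactorial (∑ i, c i) * N m (η - ∑ i, c i) : ℕ) : k) * ρ (E (c + m))) := by
      intro c _
      rw [coeff_smul, diffMonomial_coeffMap ρ c, diffMonomial_L e c η,
        coeff_coeffMap _ h0, coeff_smul, coeff_C_mul, coeff_L_pow e (η - ∑ i, c i) m]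
      have hq : (E c * (N m (η - ∑ i, c i) • E m) : Q)
          = N m (η - ∑ i, c i) • E (c + m) := by
        rw [mul_smul_comm, hEadd]
      rw [hq, map_nsmul, map_nsmul]
      simp only [smul_eq_mul, nsmul_eq_mul]
      push_cast
      ring
    rw [show diffOp f (coeffMap (fun a => ρ a) ((∑ i, MvPolynomial.C (e i) * X i) ^ η))
        = ∑ c ∈ f.support, coeff c f • diffMonomial c (coeffMap (fun a => ρ a)
            ((∑ i, MvPolynomial.C (e i) * X i) ^ η)) from rfl,
      coeff_sum, Finset.sum_congr rfl hterm]
    -- right hand side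
    have hRHS : ((η.descFactorial (η - ∑ i, m i) * N m (∑ i, m i) : ℕ) : k) *
          ρ (Ideal.Quotient.mk J
            (homogeneousComponent (η - ∑ i, m i) f * monomial m (1 : k)))
        = ∑ c ∈ f.support,
            (if c.degree = η - ∑ i, m i then
              ((η.descFactorial (η - ∑ i, m i) * N m (∑ i, m i) : ℕ) : k) *
                (coeff c f * ρ (E (c + m)))
            else 0) := by
      rw [homogeneousComponent_apply, Finset.sum_mul, map_sum, map_sum, Finset.mul_sum,
        ← Finset.sum_filter]
      apply Finset.sum_congr rfl
      intro c _
      rw [monomial_mul, mul_one, hmkmono, hρalg]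
    rw [hRHS]
    apply Finset.sum_congr rfl
    intro c _
    rw [degree_eq_sum_univ c]
    by_cases hcm : (∑ i, c i) = η - ∑ i, m i
    · rw [if_pos hcm]
      by_cases htm : (∑ i, m i) ≤ η
      · rw [hcm]
        have h1 : η - (η - ∑ i, m i) = ∑ i, m i := by omega
        rw [h1]
        ring
      · have hz : E (c + m) = 0 := hE0 _ (by rw [hdegsum]; omega)
        rw [hz, map_zero, mul_zero, mul_zero, mul_zero]
    · rw [if_neg hcm]
      by_cases hcη : (∑ i, c i) ≤ η
      · have hNz : N m (η - ∑ i, c i) = 0 := N_zero _ _ (by omega)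
        rw [hNz]
        simp
      · have hdz : η.descFactorial (∑ i, c i) = 0 :=
          Nat.descFactorial_eq_zero_iff_lt.mpr (by omega)
        rw [hdz]
        simp
  have hCst : ∀ m : Fin n →₀ ℕ,
      ((η.descFactorial (η - ∑ i, m i) * N m (∑ i, m i) : ℕ) : k) ≠ 0 := by
    intro m
    rw [Nat.cast_ne_zero]
    apply Nat.mul_ne_zero
    · intro hz
      have := Nat.descFactorial_eq_zero_iff_lt.mp hz
      omega
    · exact (N_pos _ m rfl).ne'
  have hiff : ∀ f : MvPolynomial (Fin n) k,
      diffOp f (coeffMap (fun a => ρ a) ((∑ i, MvPolynomial.C (e i) * X i) ^ η)) = 0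
        ↔ ∀ m : Fin n →₀ ℕ,
          ρ (Ideal.Quotient.mk J
            (homogeneousComponent (η - ∑ i, m i) f * monomial m (1 : k))) = 0 := by
    intro f
    constructor
    · intro hf m
      have := congrArg (coeff m) hf
      rw [hkey f m, coeff_zero] at this
      exact (mul_eq_zero.mp this).resolve_left (hCst m)
    · intro hf
      ext m
      rw [hkey f m, hf m, mul_zero, coeff_zero]
  -- nondegeneracy
  have hnd : ∀ a : Q, (∀ b : Q, ρ (a * b) = 0) → a = 0 := by
    have hMdec : ∀ a : Q, ∃ c : k, a - algebraMap k Q c ∈ M := by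
      intro a
      obtain ⟨p, rfl⟩ := Ideal.Quotient.mk_surjective a
      refine ⟨coeff 0 p, ?_⟩
      have hmem : p - C (coeff 0 p) ∈ Ideal.span (Set.range (X : Fin n → MvPolynomial (Fin n) k)) := by
        rw [← Set.image_univ, mem_ideal_span_X_image]
        intro m hm
        have hm0 : m ≠ 0 := by
          rintro rfl
          apply mem_support_iff.mp hm
          simp [coeff_sub, coeff_zero_C]
        have : ∃ i, m i ≠ 0 := by
          by_contra hc
          push_neg at hc
          exact hm0 (Finsupp.ext fun i => hc i)
        obtain ⟨i, hi⟩ := this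
        exact ⟨i, Set.mem_univ i, hi⟩
      have : Ideal.Quotient.mk J p - algebraMap k Q (coeff 0 p)
          = Ideal.Quotient.mk J (p - C (coeff 0 p)) := by
        rw [map_sub]
        congr 1
      rw [this, hM]
      exact Ideal.mem_map_of_mem _ hmem
    obtain ⟨p, hphom, hpρ⟩ := hρtop
    have hz : Ideal.Quotient.mk J p ∈ socle k M := by
      rw [mem_socle_iff]
      constructor
      · exact Ideal.pow_le_self hη0 (hmkhom p η hphom)
      · intro y hy
        have h1 : y * Ideal.Quotient.mk J p ∈ M * M ^ η :=
          Ideal.mul_mem_mul hy (hmkhom p η hphom)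
        rw [show M * M ^ η = M ^ (η + 1) from (pow_succ' M η).symm] at h1
        rw [hη₂] at h1
        exact (Submodule.mem_bot _).mp h1
    intro a ha
    exact nondeg M hMdec η hη₂ hGor ρ _ hz hpρ a ha
  constructor
  · -- homogeneity of S
    apply isHom_of_forall
    intro m hm
    by_contra hne
    apply hm
    rw [coeff_coeffMap _ h0, coeff_L_pow e η m, N_zero η m hne, zero_smul, map_zero]
  · intro f
    rw [show (∑ i, MvPolynomial.C (Ideal.Quotient.mk J (X i)) * X i : MvPolynomial (Fin n) Q)
        = ∑ i, MvPolynomial.C (e i) * X i from rfl, hiff f]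
    constructor
    · intro hT
      have hcomp : ∀ j : ℕ, homogeneousComponent j f ∈ J := by
        intro j
        by_cases hjη : j ≤ η
        · rw [← Ideal.Quotient.eq_zero_iff_mem]
          apply hnd
          intro b
          obtain ⟨h, rfl⟩ := Ideal.Quotient.mk_surjective b
          rw [← support_sum_monomial_coeff h, map_sum, Finset.mul_sum, map_sum]
          apply Finset.sum_eq_zero
          intro m _
          rw [hmkmono m (coeff m h), mul_left_comm, hρalg]
          have hgm : Ideal.Quotient.mk J (homogeneousComponent j f) * E m
              = Ideal.Quotient.mk J (homogeneousComponent j f * monomial m (1 : k)) := by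
            rw [map_mul, hmkmono1]
          rw [hgm]
          have hghom : (homogeneousComponent j f * monomial m (1 : k)).IsHomogeneous
              (j + ∑ i, m i) :=
            (homogeneousComponent_isHomogeneous j f).mul
              (isHomogeneous_monomial _ (degree_eq_sum_univ m))
          rcases lt_trichotomy (j + ∑ i, m i) η with hlt | heq | hgt
          · rw [hρlow _ hlt _ hghom, mul_zero]
          · have hjm : η - ∑ i, m i = j := by omega
            have := hT m
            rw [hjm] at this
            rw [this, mul_zero]
          · rw [hbig _ _ hgt hghom, map_zero, mul_zero]
        · rw [← Ideal.Quotient.eq_zero_iff_mem]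
          exact hbig _ _ (by omega) (homogeneousComponent_isHomogeneous j f)
      rw [← sum_homogeneousComponent f]
      exact Ideal.sum_mem _ (fun i _ => hcomp i)
    · intro hfJ m
      have hmem : homogeneousComponent (η - ∑ i, m i) f * monomial m (1 : k) ∈ J :=
        Ideal.mul_mem_right _ _ (hJhom f hfJ _)
      rw [Ideal.Quotient.eq_zero_iff_mem.mpr hmem, map_zero]
end

section
/- A binary form R of even degree 2N over ℂ has vanishing catalecticant Cat(R) = 0 if and only if its partial derivatives of order N are linearly dependent in the space of binary forms of degree N. -/
open MvPolynomial

set_option synthInstance.maxHeartbeats 400000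
set_option maxHeartbeats 1000000

/-- The catalecticant of a binary form of even degree `2N`:
writing `R = Σ_j C(2N,j) a_j z₁^{2N-j} z₂^j`, it is the determinant of the Hankel
matrix `(a_{i+j})_{0 ≤ i,j ≤ N}`. -/
noncomputable def catalecticant (N : ℕ) (R : MvPolynomial (Fin 2) ℂ) : ℂ :=
  (Matrix.of fun i j : Fin (N + 1) =>
    R.coeff (Finsupp.single 0 (2 * N - (i.1 + j.1)) + Finsupp.single 1 (i.1 + j.1)) /
      (Nat.choose (2 * N) (i.1 + j.1) : ℂ)).det

lemma coeff_pderiv' {σ : Type*} [DecidableEq σ] (i : σ) (m : σ →₀ ℕ) (p : MvPolynomial σ ℂ) :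
    (pderiv i p).coeff m = (m i + 1 : ℕ) * p.coeff (m + Finsupp.single i 1) := by
  induction p using MvPolynomial.induction_on' with
  | monomial s a =>
    rw [pderiv_monomial, coeff_monomial, coeff_monomial]
    by_cases h : s = m + Finsupp.single i 1
    · have h1 : s - Finsupp.single i 1 = m := by
        subst h; exact add_tsub_cancel_right _ _
      have h2 : s i = m i + 1 := by
        subst h; simp
      simp [h1, h, h2, mul_comm]
    · rw [if_neg h]
      by_cases h1 : s - Finsupp.single i 1 = m
      · rw [if_pos h1]
        have h2 : s i = 0 := by
          by_contra h2
          apply h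
          rw [← h1]
          ext j
          by_cases hj : j = i
          · subst hj; simp [Finsupp.sub_apply]; omega
          · simp [Finsupp.sub_apply, Finsupp.single_apply, hj, Ne.symm hj]
        simp [h2]
      · simp [h1]
  | add p q hp hq => simp [hp, hq, mul_add]

lemma coeff_pderiv_pow (i : Fin 2) (n : ℕ) (m : Fin 2 →₀ ℕ) (p : MvPolynomial (Fin 2) ℂ) :
    ((((pderiv i).toLinearMap : Module.End ℂ (MvPolynomial (Fin 2) ℂ)) ^ n) p).coeff m
      = (∏ t ∈ Finset.range n, ((m i + 1 + t : ℕ) : ℂ)) * p.coeff (m + Finsupp.single i n) := by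
  induction n generalizing m with
  | zero => simp
  | succ n ih =>
    rw [pow_succ', Module.End.mul_apply]
    have : ((pderiv i).toLinearMap ((((pderiv i).toLinearMap : Module.End ℂ (MvPolynomial (Fin 2) ℂ)) ^ n) p))
        = pderiv i ((((pderiv i).toLinearMap : Module.End ℂ (MvPolynomial (Fin 2) ℂ)) ^ n) p) := rfl
    rw [this, coeff_pderiv', ih]
    rw [Finset.prod_range_succ']
    have hm : m + Finsupp.single i 1 + Finsupp.single i n = m + Finsupp.single i (n + 1) := by
      rw [add_assoc, ← Finsupp.single_add, add_comm 1 n]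
    have hma : (m + Finsupp.single i 1 : Fin 2 →₀ ℕ) i = m i + 1 := by simp
    rw [hm, hma]
    simp only [show ∀ t, m i + 1 + 1 + t = m i + 1 + (t + 1) from fun t => by omega, add_zero]
    ring

lemma prod_range_add_eq_ascFactorial (c n : ℕ) :
    ∏ t ∈ Finset.range n, (c + t) = c.ascFactorial n := by
  induction n with
  | zero => simp
  | succ n ih => rw [Finset.prod_range_succ, ih, Nat.ascFactorial_succ, mul_comm]

lemma key_nat_identity {N i k : ℕ} (hi : i ≤ N) (hk : k ≤ N) :
    (∏ t ∈ Finset.range (N - k), (N - i + 1 + t)) * (∏ t ∈ Finset.range k, (i + 1 + t))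
      * Nat.choose (2 * N) (i + k) * ((N - i).factorial * i.factorial)
      = (2 * N).factorial := by
  rw [prod_range_add_eq_ascFactorial, prod_range_add_eq_ascFactorial]
  have h1 : (N - i).factorial * (N - i + 1).ascFactorial (N - k) = (N - i + (N - k)).factorial :=
    Nat.factorial_mul_ascFactorial _ _
  have h2 : i.factorial * (i + 1).ascFactorial k = (i + k).factorial :=
    Nat.factorial_mul_ascFactorial _ _
  have hik : i + k ≤ 2 * N := by omega
  have h3 : Nat.choose (2 * N) (i + k) * (i + k).factorial * (2 * N - (i + k)).factorial
      = (2 * N).factorial := Nat.choose_mul_factorial_mul_factorial hik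
  have h4 : N - i + (N - k) = 2 * N - (i + k) := by omega
  calc (N - i + 1).ascFactorial (N - k) * (i + 1).ascFactorial k
        * Nat.choose (2 * N) (i + k) * ((N - i).factorial * i.factorial)
      = Nat.choose (2 * N) (i + k) * (i.factorial * (i + 1).ascFactorial k)
        * ((N - i).factorial * (N - i + 1).ascFactorial (N - k)) := by ring
    _ = Nat.choose (2 * N) (i + k) * (i + k).factorial * (2 * N - (i + k)).factorial := by
        rw [h1, h2, h4]
    _ = (2 * N).factorial := h3

/-- A binary form `R` of even degree `2N` over `ℂ` has vanishing
catalecticant if and only if its partial derivatives of order `N`,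
`∂^N R/(∂z₁^{N-k} ∂z₂^k)` for `k = 0, …, N`, are linearly dependent. -/
theorem catalecticant_eq_zero_iff
    (N : ℕ) (R : MvPolynomial (Fin 2) ℂ) (hR : R.IsHomogeneous (2 * N)) :
    catalecticant N R = 0 ↔
      ¬ LinearIndependent ℂ (fun k : Fin (N + 1) =>
        (((pderiv (0 : Fin 2)).toLinearMap : Module.End ℂ (MvPolynomial (Fin 2) ℂ))
            ^ (N - k.1))
          ((((pderiv (1 : Fin 2)).toLinearMap :
              Module.End ℂ (MvPolynomial (Fin 2) ℂ)) ^ k.1) R)) := by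
  classical
  -- notation
  set D : Fin (N + 1) → MvPolynomial (Fin 2) ℂ := fun k =>
    (((pderiv (0 : Fin 2)).toLinearMap : Module.End ℂ (MvPolynomial (Fin 2) ℂ)) ^ (N - k.1))
      ((((pderiv (1 : Fin 2)).toLinearMap : Module.End ℂ (MvPolynomial (Fin 2) ℂ)) ^ k.1) R)
    with hD
  set A : Matrix (Fin (N + 1)) (Fin (N + 1)) ℂ := Matrix.of fun i j : Fin (N + 1) =>
    R.coeff (Finsupp.single 0 (2 * N - (i.1 + j.1)) + Finsupp.single 1 (i.1 + j.1)) /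
      (Nat.choose (2 * N) (i.1 + j.1) : ℂ) with hA
  -- the special monomials
  set e : Fin (N + 1) → (Fin 2 →₀ ℕ) := fun i =>
    Finsupp.single 0 (N - i.1) + Finsupp.single 1 i.1 with he
  set r : Fin (N + 1) → ℂ := fun i =>
    ((2 * N).factorial : ℂ) / (((N - i.1).factorial : ℂ) * (i.1.factorial : ℂ)) with hr
  have hrne : ∀ i, r i ≠ 0 := by
    intro i
    apply div_ne_zero
    · exact_mod_cast Nat.factorial_ne_zero _
    · exact mul_ne_zero (by exact_mod_cast Nat.factorial_ne_zero _)
        (by exact_mod_cast Nat.factorial_ne_zero _)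
  -- main coefficient computation
  have hcoeff : ∀ (i k : Fin (N + 1)), (D k).coeff (e i) = r i * A i k := by
    intro i k
    have hiN : (i : ℕ) ≤ N := Nat.lt_succ_iff.mp i.isLt
    have hkN : (k : ℕ) ≤ N := Nat.lt_succ_iff.mp k.isLt
    have hik : (i : ℕ) + k ≤ 2 * N := by omega
    rw [hD]
    rw [coeff_pderiv_pow, coeff_pderiv_pow]
    have he0 : (e i) 0 = N - i.1 := by simp [he, Finsupp.single_apply]
    have he1 : (e i + Finsupp.single 0 (N - k.1) : Fin 2 →₀ ℕ) 1 = i.1 := by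
      simp [he, Finsupp.single_apply]
    have hee : e i + Finsupp.single 0 (N - k.1) + Finsupp.single 1 k.1
        = Finsupp.single 0 (2 * N - (i.1 + k.1)) + Finsupp.single 1 (i.1 + k.1) := by
      ext a
      fin_cases a <;> simp [he, Finsupp.single_apply] <;> omega
    rw [he0, he1, hee]
    have hC : ((Nat.choose (2 * N) (i.1 + k.1) : ℕ) : ℂ) ≠ 0 := by
      exact_mod_cast (Nat.choose_pos hik).ne'
    have hf1 : ((Nat.factorial (N - i.1) : ℕ) : ℂ) ≠ 0 := by
      exact_mod_cast Nat.factorial_ne_zero _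
    have hf2 : ((Nat.factorial i.1 : ℕ) : ℂ) ≠ 0 := by
      exact_mod_cast Nat.factorial_ne_zero _
    have key : ((((∏ t ∈ Finset.range (N - k.1), (N - i.1 + 1 + t))
        * (∏ t ∈ Finset.range k.1, (i.1 + 1 + t))
        * Nat.choose (2 * N) (i.1 + k.1) * ((N - i.1).factorial * i.1.factorial) : ℕ)) : ℂ)
        = (((2 * N).factorial : ℕ) : ℂ) := by
      exact_mod_cast congrArg (Nat.cast : ℕ → ℂ) (key_nat_identity hiN hkN)
    push_cast at key
    simp only [hA, hr, Matrix.of_apply]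
    rw [div_mul_div_comm]
    rw [eq_div_iff (mul_ne_zero (mul_ne_zero hf1 hf2) hC)]
    push_cast
    linear_combination R.coeff (Finsupp.single 0 (2 * N - (i.1 + k.1))
      + Finsupp.single 1 (i.1 + k.1)) * key
  -- support of linear combinations
  have hsupp : ∀ (c : Fin (N + 1) → ℂ) (m : Fin 2 →₀ ℕ),
      (∑ k, c k • D k).coeff m ≠ 0 → m 0 + m 1 = N := by
    intro c m hm
    rw [MvPolynomial.coeff_sum] at hm
    obtain ⟨k, -, hk⟩ := Finset.exists_ne_zero_of_sum_ne_zero hm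
    have hkN : (k : ℕ) ≤ N := Nat.lt_succ_iff.mp k.isLt
    rw [MvPolynomial.coeff_smul] at hk
    have hk2 : (D k).coeff m ≠ 0 := fun h => hk (by simp [h])
    rw [hD, coeff_pderiv_pow, coeff_pderiv_pow] at hk2
    have hk3 : R.coeff (m + Finsupp.single 0 (N - k.1) + Finsupp.single 1 k.1) ≠ 0 :=
      fun h => hk2 (by rw [h, mul_zero, mul_zero])
    set d : Fin 2 →₀ ℕ := m + Finsupp.single 0 (N - k.1) + Finsupp.single 1 k.1 with hd2
    have hdeg : d.degree = 2 * N := by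
      by_contra hne
      exact hk3 (hR.coeff_eq_zero hne)
    have hdd : d.degree = d 0 + d 1 := by
      rw [Finsupp.degree_apply, Finset.sum_subset (Finset.subset_univ _)
        (fun x _ hx => Finsupp.notMem_support_iff.mp hx), Fin.sum_univ_two]
    have hd0 : d 0 = m 0 + (N - k.1) := by simp [hd2, Finsupp.single_apply]
    have hd1 : d 1 = m 1 + k.1 := by simp [hd2, Finsupp.single_apply]
    rw [hdd, hd0, hd1] at hdeg
    omega
  -- combination vanishes iff all special coefficients vanish
  have hzero : ∀ (c : Fin (N + 1) → ℂ),
      (∀ i, (∑ k, c k • D k).coeff (e i) = 0) → ∑ k, c k • D k = 0 := by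
    intro c hc
    rw [MvPolynomial.eq_zero_iff]
    intro m
    by_contra hm
    have hN := hsupp c m hm
    have hm1 : m 1 ≤ N := by omega
    have : m = e ⟨m 1, by omega⟩ := by
      ext a
      fin_cases a <;> simp [he, Finsupp.single_apply] <;> omega
    rw [this] at hm
    exact hm (hc _)
  -- the matrix M
  set M : Matrix (Fin (N + 1)) (Fin (N + 1)) ℂ := Matrix.of fun i k => r i * A i k with hM
  -- linear independence transfer
  have hli : LinearIndependent ℂ D ↔ LinearIndependent ℂ (fun k : Fin (N + 1) => M.transpose k) := by
    rw [Fintype.linearIndependent_iff, Fintype.linearIndependent_iff]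
    constructor
    · intro h c hc
      apply h c
      apply hzero
      intro i
      have : (∑ k, c k • D k).coeff (e i) = ∑ k, c k * (D k).coeff (e i) := by
        simp [MvPolynomial.coeff_sum]
      rw [this]
      have := congrFun hc i
      simpa [hcoeff, hM, Matrix.transpose_apply, Finset.sum_apply] using this
    · intro h c hc
      apply h c
      funext i
      have h1 : (∑ k, c k • D k).coeff (e i) = ∑ k, c k * (D k).coeff (e i) := by
        simp [MvPolynomial.coeff_sum]
      rw [hc] at h1
      simp only [MvPolynomial.coeff_zero] at h1
      simpa [hM, Matrix.transpose_apply, Finset.sum_apply, hcoeff] using h1.symm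
  -- determinant computation
  have hdet : M.det = (∏ i, r i) * A.det := Matrix.det_mul_column r A
  have hcat : catalecticant N R = A.det := rfl
  rw [hcat, hli, show (fun k : Fin (N + 1) => M.transpose k) = M.col from rfl,
    Matrix.linearIndependent_cols_iff_isUnit,
    Matrix.isUnit_iff_isUnit_det, isUnit_iff_ne_zero, not_not, hdet]
  constructor
  · intro h; rw [h, mul_zero]
  · intro h
    rcases mul_eq_zero.mp h with h | h
    · exact absurd h (Finset.prod_ne_zero_iff.mpr fun i _ => hrne i)
    · exact h
end
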